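/- arXiv:2602.15282 — 2 statements merged into one kernel-verified Lean document; each statement's English description precedes it below -/
import Mathlib

section
/- Let $V: [0,\infty) \to \mathbf{R}$ be differentiable with $V(0) = 0$ and $V(t) \geq 0$ for all $t$. Suppose there exist signals $e, d \in L^2([0,\infty), \mathbf{R}^m)$, $z \in L^2_{loc}$, a symmetric matrix $W$, and $\gamma > 0$ such that for almost every $t$: $\dot{V}(t) + z(t)^T W z(t) + \frac{1}{\gamma} e(t)^T e(t) - \gamma\, d(t)^T d(t) \leq 0$, and the hard IQC condition $\int_0^T z(t)^T W z(t)\, dt \geq 0$ holds for all $T \geq 0$. Then $\|e\|_2 \leq \gamma \|d\|_2$. -/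
open MeasureTheory Matrix

theorem dissipation_inequality_L2_gain
    {m p : ℕ} (V V' : ℝ → ℝ)
    (e d : ℝ → EuclideanSpace ℝ (Fin m)) (z : ℝ → Fin p → ℝ)
    (W : Matrix (Fin p) (Fin p) ℝ) (γ : ℝ)
    (hγ : 0 < γ)
    (hW : W.IsSymm)
    (hV : ∀ t, HasDerivAt V (V' t) t)
    (hV0 : V 0 = 0)
    (hVnonneg : ∀ t, 0 ≤ V t)
    (he : Integrable (fun t => ‖e t‖^2) (volume.restrict (Set.Ici (0:ℝ))))
    (hd : Integrable (fun t => ‖d t‖^2) (volume.restrict (Set.Ici (0:ℝ))))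
    (hzloc : ∀ T : ℝ, IntervalIntegrable (fun t => z t ⬝ᵥ W *ᵥ z t) volume 0 T)
    (hVloc : ∀ T : ℝ, IntervalIntegrable V' volume 0 T)
    (hdiss : ∀ᵐ t ∂(volume.restrict (Set.Ici (0:ℝ))),
      V' t + z t ⬝ᵥ W *ᵥ z t + (1/γ) * ‖e t‖^2 - γ * ‖d t‖^2 ≤ 0)
    (hhard : ∀ T : ℝ, 0 ≤ T → 0 ≤ ∫ t in (0:ℝ)..T, z t ⬝ᵥ W *ᵥ z t) :
    ∫ t in Set.Ici (0:ℝ), ‖e t‖^2 ≤ γ^2 * ∫ t in Set.Ici (0:ℝ), ‖d t‖^2 := by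
  set f : ℝ → ℝ := fun t => ‖e t‖^2 with hf
  set g : ℝ → ℝ := fun t => ‖d t‖^2 with hg
  have he' : Integrable f (volume.restrict (Set.Ioi (0:ℝ))) :=
    he.mono_measure (Measure.restrict_mono Set.Ioi_subset_Ici_self le_rfl)
  have hd' : Integrable g (volume.restrict (Set.Ioi (0:ℝ))) :=
    hd.mono_measure (Measure.restrict_mono Set.Ioi_subset_Ici_self le_rfl)
  -- key bound for each T ≥ 0
  have key : ∀ T : ℝ, 0 ≤ T → ∫ t in (0:ℝ)..T, f t ≤ γ^2 * ∫ t in Set.Ici (0:ℝ), g t := by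
    intro T hT
    have heT : IntervalIntegrable f volume 0 T :=
      (intervalIntegrable_iff_integrableOn_Ioc_of_le hT).2
        (IntegrableOn.mono_set he' Set.Ioc_subset_Ioi_self)
    have hdT : IntervalIntegrable g volume 0 T :=
      (intervalIntegrable_iff_integrableOn_Ioc_of_le hT).2
        (IntegrableOn.mono_set hd' Set.Ioc_subset_Ioi_self)
    have hFTC : ∫ t in (0:ℝ)..T, V' t = V T := by
      rw [intervalIntegral.integral_eq_sub_of_hasDerivAt (fun x _ => hV x) (hVloc T), hV0,
        sub_zero]
    have hmono : ∫ t in (0:ℝ)..T, (1/γ) * f t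
        ≤ ∫ t in (0:ℝ)..T, (γ * g t - V' t - z t ⬝ᵥ W *ᵥ z t) := by
      apply intervalIntegral.integral_mono_ae_restrict hT (heT.const_mul _)
        (((hdT.const_mul γ).sub (hVloc T)).sub (hzloc T))
      have hae := ae_restrict_of_ae_restrict_of_subset
        (Set.Icc_subset_Ici_self : Set.Icc (0:ℝ) T ⊆ Set.Ici 0) hdiss
      filter_upwards [hae] with t ht
      simp only [f, g] at *
      linarith
    have h1 : ∫ t in (0:ℝ)..T, (γ * g t - V' t - z t ⬝ᵥ W *ᵥ z t)
        ≤ γ * ∫ t in (0:ℝ)..T, g t := by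
      rw [intervalIntegral.integral_sub ((hdT.const_mul γ).sub (hVloc T)) (hzloc T),
        intervalIntegral.integral_sub (hdT.const_mul γ) (hVloc T),
        intervalIntegral.integral_const_mul, hFTC]
      have := hhard T hT
      have := hVnonneg T
      linarith
    have h2 : ∫ t in (0:ℝ)..T, g t ≤ ∫ t in Set.Ici (0:ℝ), g t := by
      rw [intervalIntegral.integral_of_le hT]
      refine setIntegral_mono_set hd ?_ (HasSubset.Subset.eventuallyLE (Set.Ioc_subset_Icc_self.trans Set.Icc_subset_Ici_self))
      exact Filter.Eventually.of_forall fun t => sq_nonneg _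
    rw [intervalIntegral.integral_const_mul] at hmono
    have h3 : (1/γ) * ∫ t in (0:ℝ)..T, f t ≤ γ * ∫ t in Set.Ici (0:ℝ), g t :=
      hmono.trans (h1.trans (mul_le_mul_of_nonneg_left h2 hγ.le))
    calc ∫ t in (0:ℝ)..T, f t = γ * ((1/γ) * ∫ t in (0:ℝ)..T, f t) := by
          field_simp
      _ ≤ γ * (γ * ∫ t in Set.Ici (0:ℝ), g t) := mul_le_mul_of_nonneg_left h3 hγ.le
      _ = γ^2 * ∫ t in Set.Ici (0:ℝ), g t := by ring
  -- pass to the limit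
  have hIci : ∫ t in Set.Ici (0:ℝ), f t = ∫ t in Set.Ioi (0:ℝ), f t :=
    integral_Ici_eq_integral_Ioi
  have hlim : Filter.Tendsto (fun T => ∫ t in (0:ℝ)..T, f t) Filter.atTop
      (nhds (∫ t in Set.Ioi (0:ℝ), f t)) :=
    intervalIntegral_tendsto_integral_Ioi 0 he' Filter.tendsto_id
  rw [hIci]
  exact le_of_tendsto hlim ((Filter.eventually_ge_atTop (0:ℝ)).mono fun T hT => key T hT)
end

section
/- Let $M \in \mathbf{S}^n$, $B \in \mathbf{R}^{n \times m}$, $C \in \mathbf{R}^{p \times n}$. There exists $K \in \mathbf{R}^{m \times p}$ such that $M + B K C + (B K C)^T \prec 0$ if and only if $N_B^T M N_B \prec 0$ and $N_C^T M N_C \prec 0$, where the columns of $N_B$ and $N_C$ are bases for $\ker(B^T)$ and $\ker(C)$ respectively (with the convention that a condition is vacuous if the corresponding kernel is trivial). -/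
open Matrix Filter

private lemma dp_self_nonneg {n : ℕ} (v : Fin n → ℝ) : 0 ≤ v ⬝ᵥ v :=
  Finset.sum_nonneg fun _ _ => mul_self_nonneg _

private lemma dp_symm {n k : ℕ} (A : Matrix (Fin n) (Fin k) ℝ) (x : Fin k → ℝ) (y : Fin n → ℝ) :
    x ⬝ᵥ (Aᵀ *ᵥ y) = y ⬝ᵥ (A *ᵥ x) := by
  rw [mulVec_transpose, dotProduct_comm, ← dotProduct_mulVec]



private lemma finsler {n m : ℕ} (M : Matrix (Fin n) (Fin n) ℝ)
    (B : Matrix (Fin n) (Fin m) ℝ)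
    (h : ∀ x : Fin n → ℝ, Bᵀ *ᵥ x = 0 → x ≠ 0 → x ⬝ᵥ M *ᵥ x < 0) :
    ∃ ρ : ℝ, 0 ≤ ρ ∧ ∀ x : Fin n → ℝ, x ≠ 0 →
      x ⬝ᵥ M *ᵥ x < ρ * ((Bᵀ *ᵥ x) ⬝ᵥ (Bᵀ *ᵥ x)) := by
  set f : (Fin n → ℝ) → ℝ := fun x => x ⬝ᵥ M *ᵥ x with hfdef
  set g : (Fin n → ℝ) → ℝ := fun x => (Bᵀ *ᵥ x) ⬝ᵥ (Bᵀ *ᵥ x) with hgdef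
  have hf : Continuous f := by
    simp only [hfdef, dotProduct, mulVec]
    exact continuous_finset_sum _ fun i _ => (continuous_apply i).mul
      (continuous_finset_sum _ fun j _ => continuous_const.mul (continuous_apply j))
  have hg : Continuous g := by
    simp only [hgdef, dotProduct, mulVec]
    exact continuous_finset_sum _ fun i _ =>
      ((continuous_finset_sum _ fun j _ => continuous_const.mul (continuous_apply j)).mul
       (continuous_finset_sum _ fun j _ => continuous_const.mul (continuous_apply j)))
  have hg0 : ∀ x, 0 ≤ g x := fun x => dp_self_nonneg _
  -- step 1 : on the unit sphere
  have step1 : ∃ ρ : ℝ, 0 ≤ ρ ∧ ∀ x : Fin n → ℝ, ‖x‖ = 1 → f x < ρ * g x := by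
    by_contra hcon
    push_neg at hcon
    have H : ∀ k : ℕ, ∃ x : Fin n → ℝ, ‖x‖ = 1 ∧ (k : ℝ) * g x ≤ f x := by
      intro k
      obtain ⟨x, hx1, hx2⟩ := hcon k (Nat.cast_nonneg k)
      exact ⟨x, hx1, hx2⟩
    choose x hx1 hx2 using H
    have hmem : ∀ k, x k ∈ Metric.sphere (0 : Fin n → ℝ) 1 := by
      intro k; rw [mem_sphere_zero_iff_norm]; exact hx1 k
    have hcpt := isCompact_sphere (0 : Fin n → ℝ) 1
    obtain ⟨a, hamem, φ, hφ, htend⟩ := hcpt.tendsto_subseq hmem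
    -- bound f on the sphere
    obtain ⟨x₀, hx₀, hmaxx⟩ := hcpt.exists_isMaxOn ⟨x 0, hmem 0⟩ hf.continuousOn
    set Cm := f x₀ with hCm
    have hbound : ∀ k, f (x k) ≤ Cm := fun k => hmaxx (hmem k)
    have hgk : ∀ k : ℕ, 1 ≤ k → g (x k) ≤ Cm / k := by
      intro k hk
      have hkpos : (0:ℝ) < k := by exact_mod_cast hk
      rw [le_div_iff₀ hkpos]
      calc g (x k) * k = (k:ℝ) * g (x k) := mul_comm _ _
        _ ≤ f (x k) := hx2 k
        _ ≤ Cm := hbound k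
    -- g (x (φ k)) → 0
    have hφtop : Tendsto φ atTop atTop := hφ.tendsto_atTop
    have hgtend0 : Tendsto (fun k => g (x (φ k))) atTop (nhds 0) := by
      apply squeeze_zero' (Eventually.of_forall fun k => hg0 _)
      · filter_upwards [hφtop.eventually_ge_atTop 1] with k hk
        exact hgk (φ k) hk
      · exact (tendsto_const_div_atTop_nhds_zero_nat Cm).comp hφtop
    have hgtend : Tendsto (fun k => g (x (φ k))) atTop (nhds (g a)) :=
      (hg.tendsto a).comp htend
    have hga : g a = 0 := tendsto_nhds_unique hgtend hgtend0
    have hftend : Tendsto (fun k => f (x (φ k))) atTop (nhds (f a)) :=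
      (hf.tendsto a).comp htend
    have hfa : 0 ≤ f a := by
      apply ge_of_tendsto' hftend
      intro k
      calc (0:ℝ) ≤ (φ k : ℝ) * g (x (φ k)) :=
            mul_nonneg (Nat.cast_nonneg _) (hg0 _)
        _ ≤ f (x (φ k)) := hx2 (φ k)
    have hanorm : ‖a‖ = 1 := by simpa using hamem
    have ha0 : a ≠ 0 := by
      intro hh; simp [hh] at hanorm
    have hBa : Bᵀ *ᵥ a = 0 := dotProduct_self_eq_zero.mp hga
    exact absurd (h a hBa ha0) (not_lt.mpr hfa)
  obtain ⟨ρ, hρ0, hρ⟩ := step1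
  refine ⟨ρ, hρ0, fun x hx => ?_⟩
  set c : ℝ := ‖x‖ with hc
  have hcpos : 0 < c := norm_pos_iff.mpr hx
  set y : Fin n → ℝ := c⁻¹ • x with hy
  have hyn : ‖y‖ = 1 := by
    rw [hy, norm_smul, norm_inv, norm_norm, inv_mul_cancel₀ (ne_of_gt hcpos)]
  have hfy : f y = c⁻¹ * (c⁻¹ * f x) := by
    simp only [hfdef, hy, mulVec_smul, smul_dotProduct, dotProduct_smul, smul_eq_mul]
  have hgy : g y = c⁻¹ * (c⁻¹ * g x) := by
    simp only [hgdef, hy, mulVec_smul, smul_dotProduct, dotProduct_smul, smul_eq_mul]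
  have := hρ y hyn
  rw [hfy, hgy] at this
  have hc2 : 0 < c * c := mul_pos hcpos hcpos
  have h2 := mul_lt_mul_of_pos_left this hc2
  have hcc : c * c * (c⁻¹ * (c⁻¹ * f x)) = f x := by field_simp
  have hcc2 : c * c * (ρ * (c⁻¹ * (c⁻¹ * g x))) = ρ * g x := by field_simp
  rw [hcc, hcc2] at h2
  exact h2
private lemma decomp_symm {n : ℕ} (A : Matrix (Fin n) (Fin n) ℝ) (hA : Aᵀ = A)
    (z : Fin n → ℝ) : ∃ w v, z = A *ᵥ w + v ∧ A *ᵥ v = 0 := by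
  set f := A.mulVecLin with hfdef
  have hdisj : LinearMap.range f ⊓ LinearMap.ker f = ⊥ := by
    rw [Submodule.eq_bot_iff]
    rintro x hx
    obtain ⟨hr, hk⟩ := Submodule.mem_inf.mp hx
    obtain ⟨w, rfl⟩ := hr
    have hk' : A *ᵥ (f w) = 0 := hk
    have hfw : f w = A *ᵥ w := rfl
    have : (f w) ⬝ᵥ (f w) = 0 := by
      rw [hfw, ← hA, dp_symm, hA, ← hfw, hk', dotProduct_zero]
    rwa [dotProduct_self_eq_zero] at this
  have htop : LinearMap.range f ⊔ LinearMap.ker f = ⊤ := by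
    apply Submodule.eq_top_of_finrank_eq
    have h1 := Submodule.finrank_sup_add_finrank_inf_eq (LinearMap.range f) (LinearMap.ker f)
    have h2 := LinearMap.finrank_range_add_finrank_ker f
    rw [hdisj] at h1
    simp only [finrank_bot, add_zero] at h1
    rw [h1, h2]
  have hz : z ∈ LinearMap.range f ⊔ LinearMap.ker f := htop ▸ Submodule.mem_top
  obtain ⟨y, hy, v, hv, rfl⟩ := Submodule.mem_sup.mp hz
  obtain ⟨w, rfl⟩ := hy
  exact ⟨w, v, rfl, hv⟩

private lemma decompG {n p : ℕ} {G : Matrix (Fin n) (Fin n) ℝ} (hG : G.PosDef)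
    (C : Matrix (Fin p) (Fin n) ℝ) (x : Fin n → ℝ) :
    ∃ u v w, x = u + v ∧ G *ᵥ u = Cᵀ *ᵥ w ∧ C *ᵥ v = 0 := by
  have hdet : IsUnit G.det := isUnit_iff_ne_zero.mpr (ne_of_gt hG.det_pos)
  have hGi : G.PosDef → G⁻¹.PosDef := Matrix.PosDef.inv
  have hGinv := hGi hG
  have hGsymm : Gᵀ = G := by
    have := hG.1
    rw [Matrix.IsHermitian, conjTranspose_eq_transpose_of_trivial] at this
    exact this
  have hGisymm : G⁻¹ᵀ = G⁻¹ := by rw [transpose_nonsing_inv, hGsymm]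
  set S := C * G⁻¹ * Cᵀ with hSdef
  have hSsymm : Sᵀ = S := by
    rw [hSdef, transpose_mul, transpose_mul, transpose_transpose, hGisymm, Matrix.mul_assoc]
  obtain ⟨w, s, hws, hSs⟩ := decomp_symm S hSsymm (C *ᵥ x)
  set t := Cᵀ *ᵥ s with htdef
  have hSapp : ∀ y, S *ᵥ y = C *ᵥ (G⁻¹ *ᵥ (Cᵀ *ᵥ y)) := by
    intro y; rw [hSdef, mulVec_mulVec, mulVec_mulVec]
  have hdpS : ∀ y, y ⬝ᵥ (S *ᵥ y) = (Cᵀ *ᵥ y) ⬝ᵥ (G⁻¹ *ᵥ (Cᵀ *ᵥ y)) := by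
    intro y
    rw [hSapp, ← dp_symm C (G⁻¹ *ᵥ (Cᵀ *ᵥ y)) y, dotProduct_comm]
  have ht0 : t = 0 := by
    by_contra ht
    have hpos := hGinv.dotProduct_mulVec_pos ht
    rw [star_trivial] at hpos
    have : t ⬝ᵥ (G⁻¹ *ᵥ t) = 0 := by
      rw [htdef, ← hdpS s, hSs, dotProduct_zero]
    rw [this] at hpos
    exact lt_irrefl 0 hpos
  have hs0 : s = 0 := by
    have hsv : s = C *ᵥ x - S *ᵥ w := by
      rw [hws]; abel
    have h1 : s ⬝ᵥ (C *ᵥ x) = 0 := by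
      rw [← dp_symm C x s, ← htdef, ht0, dotProduct_zero]
    have h2 : s ⬝ᵥ (S *ᵥ w) = 0 := by
      rw [hSapp, ← dp_symm C (G⁻¹ *ᵥ (Cᵀ *ᵥ w)) s, ← htdef, ht0, dotProduct_zero]
    have : s ⬝ᵥ s = 0 := by
      nth_rewrite 2 [hsv]
      rw [dotProduct_sub, h1, h2, sub_zero]
    exact dotProduct_self_eq_zero.mp this
  have hCx : C *ᵥ x = S *ᵥ w := by rw [hws, hs0, add_zero]
  refine ⟨G⁻¹ *ᵥ (Cᵀ *ᵥ w), x - G⁻¹ *ᵥ (Cᵀ *ᵥ w), w, by abel, ?_, ?_⟩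
  · rw [mulVec_mulVec, mul_nonsing_inv G hdet, one_mulVec]
  · rw [mulVec_sub, hCx, hSapp, sub_self]

private lemma exists_factor {n p : ℕ} (fC : (Fin n → ℝ) →ₗ[ℝ] (Fin p → ℝ))
    (P : (Fin n → ℝ) →ₗ[ℝ] (Fin n → ℝ)) (hker : LinearMap.ker fC ≤ LinearMap.ker P) :
    ∃ L : (Fin p → ℝ) →ₗ[ℝ] (Fin n → ℝ), ∀ x, L (fC x) = P x := by
  set e := fC.quotKerEquivRange with hedef
  set Lq := (LinearMap.ker fC).liftQ P hker with hLqdef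
  obtain ⟨L, hL⟩ := LinearMap.exists_extend (Lq ∘ₗ e.symm.toLinearMap)
  refine ⟨L, fun x => ?_⟩
  have hmem : fC x ∈ LinearMap.range fC := LinearMap.mem_range_self fC x
  have h1 : e (Submodule.Quotient.mk x) = ⟨fC x, hmem⟩ := by
    exact Subtype.ext (LinearMap.quotKerEquivRange_apply_mk fC x)
  have h2 : e.symm ⟨fC x, hmem⟩ = Submodule.Quotient.mk x := by
    rw [← h1, LinearEquiv.symm_apply_apply]
  calc L (fC x) = (L ∘ₗ (LinearMap.range fC).subtype) ⟨fC x, hmem⟩ := rfl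
    _ = (Lq ∘ₗ e.symm.toLinearMap) ⟨fC x, hmem⟩ := by rw [hL]
    _ = Lq (e.symm ⟨fC x, hmem⟩) := rfl
    _ = Lq (Submodule.Quotient.mk x) := by rw [h2]
    _ = P x := Submodule.liftQ_apply _ _ _
theorem elimination_lemma
    {n m p : ℕ} (M : Matrix (Fin n) (Fin n) ℝ)
    (B : Matrix (Fin n) (Fin m) ℝ) (C : Matrix (Fin p) (Fin n) ℝ)
    (hM : M.IsSymm) :
    (∃ K : Matrix (Fin m) (Fin p) ℝ,
        (-(M + B * K * C + (B * K * C)ᵀ)).PosDef) ↔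
      ((∀ x : Fin n → ℝ, Bᵀ *ᵥ x = 0 → x ≠ 0 → x ⬝ᵥ M *ᵥ x < 0) ∧
       (∀ x : Fin n → ℝ, C *ᵥ x = 0 → x ≠ 0 → x ⬝ᵥ M *ᵥ x < 0)) := by
  constructor
  · rintro ⟨K, hK⟩
    set N := B * K * C with hNdef
    have goalEq : ∀ x : Fin n → ℝ, (star x) ⬝ᵥ ((-(M + N + Nᵀ)) *ᵥ x) =
        -(x ⬝ᵥ (M *ᵥ x) + x ⬝ᵥ (N *ᵥ x) + x ⬝ᵥ (Nᵀ *ᵥ x)) := by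
      intro x
      rw [star_trivial, neg_mulVec, dotProduct_neg, add_mulVec, add_mulVec,
        dotProduct_add, dotProduct_add]
    have key : ∀ x : Fin n → ℝ, x ≠ 0 → x ⬝ᵥ (N *ᵥ x) = 0 → x ⬝ᵥ M *ᵥ x < 0 := by
      intro x hx h0
      have hpos := hK.dotProduct_mulVec_pos hx
      rw [goalEq x, dp_symm N x x, h0] at hpos
      linarith
    constructor
    · intro x hBx hx
      apply key x hx
      have hNx : N *ᵥ x = B *ᵥ ((K * C) *ᵥ x) := by
        rw [mulVec_mulVec, ← Matrix.mul_assoc]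
      rw [hNx, ← dp_symm B ((K * C) *ᵥ x) x, hBx, dotProduct_zero]
    · intro x hCx hx
      apply key x hx
      have hNx : N *ᵥ x = (B * K) *ᵥ (C *ᵥ x) := by rw [mulVec_mulVec]
      rw [hNx, hCx, mulVec_zero, dotProduct_zero]
  · rintro ⟨hB, hC⟩
    obtain ⟨ρ, hρ0, hρ⟩ := finsler M B hB
    set G := ρ • (B * Bᵀ) - M with hGdef
    have hMt : Mᵀ = M := hM.eq
    have dpBB : ∀ u : Fin n → ℝ, u ⬝ᵥ ((B * Bᵀ) *ᵥ u) = (Bᵀ *ᵥ u) ⬝ᵥ (Bᵀ *ᵥ u) := by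
      intro u
      rw [← mulVec_mulVec, ← dp_symm B (Bᵀ *ᵥ u) u]
    have hGquad : ∀ z : Fin n → ℝ, z ⬝ᵥ (G *ᵥ z) =
        ρ * ((Bᵀ *ᵥ z) ⬝ᵥ (Bᵀ *ᵥ z)) - z ⬝ᵥ (M *ᵥ z) := by
      intro z
      rw [hGdef, sub_mulVec, dotProduct_sub, smul_mulVec, dotProduct_smul,
        smul_eq_mul, dpBB]
    have hG : G.PosDef := by
      rw [posDef_iff_dotProduct_mulVec]
      constructor
      · rw [Matrix.IsHermitian, conjTranspose_eq_transpose_of_trivial, hGdef,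
          transpose_sub, transpose_smul, transpose_mul, transpose_transpose, hMt]
      · intro z hz
        rw [star_trivial, hGquad z]
        have := hρ z hz
        linarith
    -- submodules
    set fC := C.mulVecLin with hfCdef
    set U : Submodule ℝ (Fin n → ℝ) :=
      (LinearMap.range (Cᵀ.mulVecLin)).comap G.mulVecLin with hUdef
    set KC := LinearMap.ker fC with hKCdef
    have hUmem : ∀ z, z ∈ U ↔ ∃ w, Cᵀ *ᵥ w = G *ᵥ z := by
      intro z
      simp only [hUdef, Submodule.mem_comap, LinearMap.mem_range, mulVecLin_apply]
    have hKCmem : ∀ z, z ∈ KC ↔ C *ᵥ z = 0 := by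
      intro z
      simp [hKCdef, LinearMap.mem_ker, hfCdef, mulVecLin_apply]
    have hdisj : Disjoint U KC := by
      rw [Submodule.disjoint_def]
      intro z hzU hzK
      obtain ⟨w, hw⟩ := (hUmem z).mp hzU
      have hCz := (hKCmem z).mp hzK
      by_contra hz0
      have hpos := hG.dotProduct_mulVec_pos hz0
      rw [star_trivial] at hpos
      have : z ⬝ᵥ (G *ᵥ z) = 0 := by
        rw [← hw, dp_symm C z w, hCz, dotProduct_zero]
      rw [this] at hpos
      exact lt_irrefl 0 hpos
    have hcodis : Codisjoint U KC := by
      rw [codisjoint_iff, Submodule.eq_top_iff']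
      intro z
      obtain ⟨u, v, w, hzuv, hGu, hCv⟩ := decompG hG C z
      refine Submodule.mem_sup.mpr ⟨u, (hUmem u).mpr ⟨w, hGu.symm⟩, v,
        (hKCmem v).mpr hCv, hzuv.symm⟩
    have hcompl : IsCompl U KC := ⟨hdisj, hcodis⟩
    set P : (Fin n → ℝ) →ₗ[ℝ] (Fin n → ℝ) :=
      U.subtype ∘ₗ U.linearProjOfIsCompl KC hcompl with hPdef
    have hPleft : ∀ u (hu : u ∈ U), P u = u := by
      intro u hu
      have := Submodule.linearProjOfIsCompl_apply_left hcompl ⟨u, hu⟩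
      simp only [hPdef, LinearMap.comp_apply]
      erw [this]
      rfl
    have hPright : ∀ v (hv : v ∈ KC), P v = 0 := by
      intro v hv
      have := Submodule.linearProjOfIsCompl_apply_right hcompl ⟨v, hv⟩
      simp only [hPdef, LinearMap.comp_apply]
      erw [this]
      rfl
    have hkerP : LinearMap.ker fC ≤ LinearMap.ker P := by
      intro v hv
      rw [LinearMap.mem_ker]
      exact hPright v hv
    obtain ⟨L, hL⟩ := exists_factor fC P hkerP
    set Lm := LinearMap.toMatrix' L with hLmdef
    have hLm : ∀ y, Lm *ᵥ y = L y := by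
      intro y
      rw [← Matrix.toLin'_apply, hLmdef, Matrix.toLin'_toMatrix']
    refine ⟨(-ρ) • (Bᵀ * Lm), ?_⟩
    set K := (-ρ) • (Bᵀ * Lm) with hKdef
    set N := B * K * C with hNdef
    have hNx : ∀ x, N *ᵥ x = (-ρ) • ((B * Bᵀ) *ᵥ (P x)) := by
      intro x
      have h1 : N = (-ρ) • (B * Bᵀ * Lm * C) := by
        rw [hNdef, hKdef]
        simp only [Matrix.mul_smul, Matrix.smul_mul, Matrix.mul_assoc]
      rw [h1, smul_mulVec]
      congr 1
      rw [← mulVec_mulVec, ← mulVec_mulVec]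
      congr 1
      have : C *ᵥ x = fC x := rfl
      rw [this, hLm, hL]
    have goalEq : ∀ x : Fin n → ℝ, (star x) ⬝ᵥ ((-(M + N + Nᵀ)) *ᵥ x) =
        -(x ⬝ᵥ (M *ᵥ x) + x ⬝ᵥ (N *ᵥ x) + x ⬝ᵥ (Nᵀ *ᵥ x)) := by
      intro x
      rw [star_trivial, neg_mulVec, dotProduct_neg, add_mulVec, add_mulVec,
        dotProduct_add, dotProduct_add]
    rw [posDef_iff_dotProduct_mulVec]
    constructor
    · rw [Matrix.IsHermitian, conjTranspose_eq_transpose_of_trivial,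
        transpose_neg, transpose_add, transpose_add, transpose_transpose, hMt]
      abel_nf
    · intro x hx
      obtain ⟨u, v, w, hxuv, hGu, hCv⟩ := decompG hG C x
      have hu : u ∈ U := (hUmem u).mpr ⟨w, hGu.symm⟩
      have hv : v ∈ KC := (hKCmem v).mpr hCv
      have hPx : P x = u := by
        rw [hxuv, map_add, hPleft u hu, hPright v hv, add_zero]
      rw [goalEq x]
      -- scalar abbreviations
      set mu := u ⬝ᵥ (M *ᵥ u) with hmu
      set muv := u ⬝ᵥ (M *ᵥ v) with hmuv
      set mv := v ⬝ᵥ (M *ᵥ v) with hmv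
      set gu := u ⬝ᵥ (G *ᵥ u) with hgu
      set bu := (Bᵀ *ᵥ u) ⬝ᵥ (Bᵀ *ᵥ u) with hbu
      have hMsymuv : v ⬝ᵥ (M *ᵥ u) = muv := by
        rw [hmuv, ← hMt, dp_symm M u v, hMt]
      have hvGu : v ⬝ᵥ (G *ᵥ u) = 0 := by
        rw [hGu, dp_symm C v w, hCv, dotProduct_zero]
      have e1 : x ⬝ᵥ (M *ᵥ x) = mu + 2 * muv + mv := by
        rw [hxuv, mulVec_add, add_dotProduct, dotProduct_add, dotProduct_add,
          hMsymuv, ← hmu, ← hmuv, ← hmv]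
        ring
      have e2 : x ⬝ᵥ (G *ᵥ u) = gu := by
        rw [hxuv, add_dotProduct, hvGu, add_zero, hgu]
      have e3 : x ⬝ᵥ (M *ᵥ u) = mu + muv := by
        rw [hxuv, add_dotProduct, hMsymuv, hmu]
      have e4 : ρ * (x ⬝ᵥ ((B * Bᵀ) *ᵥ u)) = gu + (mu + muv) := by
        have h1 : x ⬝ᵥ ((ρ • (B * Bᵀ)) *ᵥ u) = ρ * (x ⬝ᵥ ((B * Bᵀ) *ᵥ u)) := by
          rw [smul_mulVec, dotProduct_smul, smul_eq_mul]
        have h2 : ρ • (B * Bᵀ) = G + M := by rw [hGdef]; abel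
        rw [← h1, h2, add_mulVec, dotProduct_add, e2, e3]
      have e5 : gu = ρ * bu - mu := by rw [hgu, hGquad u, hbu, hmu]
      have hNdot : x ⬝ᵥ (N *ᵥ x) = -(ρ * (x ⬝ᵥ ((B * Bᵀ) *ᵥ u))) := by
        rw [hNx x, hPx, dotProduct_smul, smul_eq_mul]
        ring
      have hNtdot : x ⬝ᵥ (Nᵀ *ᵥ x) = x ⬝ᵥ (N *ᵥ x) := dp_symm N x x
      have hsum : x ⬝ᵥ (M *ᵥ x) + x ⬝ᵥ (N *ᵥ x) + x ⬝ᵥ (Nᵀ *ᵥ x)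
          = mv - gu - ρ * bu := by
        rw [hNtdot, hNdot, e1]
        linarith [e4, e5]
      rw [hsum]
      -- now bounds
      have hbu0 : 0 ≤ bu := dp_self_nonneg _
      have hgu0 : 0 ≤ gu := by
        rcases eq_or_ne u 0 with h | h
        · rw [hgu, h, zero_dotProduct]
        · have := hG.dotProduct_mulVec_pos h; rw [star_trivial] at this; exact le_of_lt (hgu ▸ this)
      by_cases hu0 : u = 0
      · have hv0 : v ≠ 0 := by
          intro hh; rw [hu0, hh, add_zero] at hxuv; exact hx hxuv
        have hmvneg : mv < 0 := hC v hCv hv0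
        have hgu' : gu = 0 := by rw [hgu, hu0, zero_dotProduct]
        have hbu' : bu = 0 := by rw [hbu, hu0, mulVec_zero, dotProduct_zero]
        rw [hgu', hbu']
        linarith
      · have hgupos : 0 < gu := by
          have := hG.dotProduct_mulVec_pos hu0; rw [star_trivial] at this; exact hgu ▸ this
        have hmv0 : mv ≤ 0 := by
          rcases eq_or_ne v 0 with h | h
          · rw [hmv, h, zero_dotProduct]
          · exact le_of_lt (hC v hCv h)
        have : 0 ≤ ρ * bu := mul_nonneg hρ0 hbu0
        linarith
end
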